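/- arXiv:1510.08368 — 3 statements merged into one kernel-verified Lean document; each statement's English description precedes it below -/
import Mathlib

section
/- If a K-reachable set C ⊆ ℝⁿ is 1-reachable (i.e., K = 1 works with respect to the Euclidean norm), then C is convex, provided C is closed. -/
open Set

/-- A closed 1-reachable subset of ℝⁿ (Euclidean norm) is convex. -/
theorem stmt5 {n : ℕ} (C : Set (EuclideanSpace ℝ (Fin n))) (hC : IsClosed C)
    (h1 : ∀ x₀ ∈ C, ∀ y₀ ∈ C, ∃ γ : ℝ → EuclideanSpace ℝ (Fin n),
      ContDiff ℝ 1 γ ∧ MapsTo γ (Icc (0 : ℝ) 1) C ∧ γ 0 = x₀ ∧ γ 1 = y₀ ∧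
      ∀ r ∈ Icc (0 : ℝ) 1, ‖deriv γ r‖ ≤ ‖y₀ - x₀‖) :
    Convex ℝ C := by
  rw [convex_iff_segment_subset]
  intro x hx y hy z hz
  obtain ⟨γ, hγ, hmap, hg0, hg1, hbd⟩ := h1 x hx y hy
  rw [segment_eq_image_lineMap] at hz
  obtain ⟨t, ht, rfl⟩ := hz
  obtain ⟨ht0, ht1⟩ := ht
  have hd : ∀ r : ℝ, HasDerivAt γ (deriv γ r) r := fun r =>
    ((hγ.differentiable one_ne_zero) r).hasDerivAt
  have hA : ‖γ t - γ 0‖ ≤ ‖y - x‖ * (t - 0) := by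
    refine norm_image_sub_le_of_norm_deriv_le_segment'
      (f' := deriv γ) (fun s _ => (hd s).hasDerivWithinAt) ?_ t (right_mem_Icc.2 ht0)
    intro s hs
    exact hbd s ⟨hs.1, hs.2.le.trans ht1⟩
  have hB : ‖γ 1 - γ t‖ ≤ ‖y - x‖ * (1 - t) := by
    refine norm_image_sub_le_of_norm_deriv_le_segment'
      (f' := deriv γ) (fun s _ => (hd s).hasDerivWithinAt) ?_ 1 (right_mem_Icc.2 ht1)
    intro s hs
    exact hbd s ⟨ht0.trans hs.1, hs.2.le⟩
  rw [hg0] at hA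
  rw [hg1] at hB
  have htri : dist x y ≤ dist x (γ t) + dist (γ t) y := dist_triangle _ _ _
  have hA' : dist x (γ t) ≤ t * dist x y := by
    rw [dist_comm, dist_eq_norm, dist_eq_norm']
    simpa [mul_comm] using hA
  have hB' : dist (γ t) y ≤ (1 - t) * dist x y := by
    rw [dist_eq_norm', dist_eq_norm']
    simpa [mul_comm] using hB
  have hAe : dist x (γ t) = t * dist x y := by nlinarith [dist_nonneg (x := x) (y := y)]
  have hBe : dist (γ t) y = (1 - t) * dist x y := by nlinarith [dist_nonneg (x := x) (y := y)]
  have := eq_lineMap_of_dist_eq_mul_of_dist_eq_mul hAe hBe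
  rw [← this]
  exact hmap ⟨ht0, ht1⟩
end

section
/- Let f : ℝⁿ → ℝⁿ be continuously differentiable and suppose that for some c > 0 the operator norm bound μ(Df(x)) ≤ −c holds for all x in a convex forward-invariant set C, where μ is the matrix measure induced by the Euclidean norm (i.e., the symmetric part of Df(x) has all eigenvalues ≤ −c). Then any two solutions x(t), y(t) of ẋ = f(x) with initial conditions in C satisfy |x(t) − y(t)| ≤ e^{−c(t−t₀)}|x(t₀) − y(t₀)| for all t ≥ t₀. -/
open Set

private lemma key_ineq {n : ℕ} (f : EuclideanSpace ℝ (Fin n) → EuclideanSpace ℝ (Fin n))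
    (hf : ContDiff ℝ 1 f) (C : Set (EuclideanSpace ℝ (Fin n))) (hconv : Convex ℝ C)
    (c : ℝ)
    (hμ : ∀ x ∈ C, ∀ v : EuclideanSpace ℝ (Fin n),
      (inner ℝ (fderiv ℝ f x v) v : ℝ) ≤ -c * ‖v‖ ^ 2)
    {a b : EuclideanSpace ℝ (Fin n)} (ha : a ∈ C) (hb : b ∈ C) :
    (inner ℝ (f a - f b) (a - b) : ℝ) ≤ -c * ‖a - b‖ ^ 2 := by
  set w := a - b with hw
  set p : ℝ → EuclideanSpace ℝ (Fin n) := fun s => b + s • w with hp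
  have hdiff := hf.differentiable one_ne_zero
  have hpd : ∀ s : ℝ, HasDerivAt p w s := by
    intro s
    simpa [hp] using (((hasDerivAt_id s).smul_const w).const_add b)
  have hmem : ∀ s ∈ Icc (0:ℝ) 1, p s ∈ C := fun s hs =>
    hconv.add_smul_sub_mem hb ha hs
  set g : ℝ → ℝ := fun s => (inner ℝ (f (p s)) w : ℝ) + c * ‖w‖ ^ 2 * s with hg
  have hgd : ∀ s : ℝ, HasDerivAt g
      ((inner ℝ (fderiv ℝ f (p s) w) w : ℝ) + c * ‖w‖ ^ 2) s := by
    intro s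
    have h1 : HasDerivAt (fun s => f (p s)) (fderiv ℝ f (p s) w) s :=
      (hdiff (p s)).hasFDerivAt.comp_hasDerivAt s (hpd s)
    have h2 := h1.inner ℝ (hasDerivAt_const s w)
    rw [inner_zero_right, zero_add] at h2
    have h3 : HasDerivAt (fun s : ℝ => c * ‖w‖ ^ 2 * s) (c * ‖w‖ ^ 2) s := by
      simpa using (hasDerivAt_id s).const_mul (c * ‖w‖ ^ 2)
    exact h2.add h3
  have hanti : AntitoneOn g (Icc 0 1) := by
    apply antitoneOn_of_deriv_nonpos (convex_Icc 0 1)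
      (fun s _ => (hgd s).continuousAt.continuousWithinAt)
      (fun s _ => (hgd s).differentiableAt.differentiableWithinAt)
    intro s hs
    rw [interior_Icc] at hs
    rw [(hgd s).deriv]
    have := hμ (p s) (hmem s (Ioo_subset_Icc_self hs)) w
    linarith
  have h01 := hanti (left_mem_Icc.2 zero_le_one) (right_mem_Icc.2 zero_le_one) zero_le_one
  have hp0 : p 0 = b := by simp [hp]
  have hp1 : p 1 = a := by simp [hp, hw]
  rw [hg] at h01
  simp only [hp0, hp1] at h01
  rw [hw, inner_sub_left]
  linarith

/-- Euclidean contraction theorem: if the symmetric part of the Jacobian of `f`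
satisfies `μ₂(Df(x)) ≤ -c` on a convex forward-invariant set `C` (expressed as
`⟪Df(x)v, v⟫ ≤ -c‖v‖²`), then any two solutions remaining in `C` converge
exponentially with rate `c`. -/
theorem stmt11 {n : ℕ} (f : EuclideanSpace ℝ (Fin n) → EuclideanSpace ℝ (Fin n))
    (hf : ContDiff ℝ 1 f) (C : Set (EuclideanSpace ℝ (Fin n))) (hconv : Convex ℝ C)
    (c : ℝ) (hc : 0 < c)
    (hμ : ∀ x ∈ C, ∀ v : EuclideanSpace ℝ (Fin n),
      (inner ℝ (fderiv ℝ f x v) v : ℝ) ≤ -c * ‖v‖ ^ 2)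
    (t₀ : ℝ) (x y : ℝ → EuclideanSpace ℝ (Fin n))
    (hx : ∀ t, t₀ ≤ t → HasDerivAt x (f (x t)) t)
    (hy : ∀ t, t₀ ≤ t → HasDerivAt y (f (y t)) t)
    (hxC : ∀ t, t₀ ≤ t → x t ∈ C) (hyC : ∀ t, t₀ ≤ t → y t ∈ C) :
    ∀ t, t₀ ≤ t → ‖x t - y t‖ ≤ Real.exp (-c * (t - t₀)) * ‖x t₀ - y t₀‖ := by
  set u : ℝ → ℝ := fun t => Real.exp (2 * c * (t - t₀)) *
    (inner ℝ (x t - y t) (x t - y t) : ℝ) with hu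
  have hud : ∀ t, t₀ ≤ t → HasDerivAt u
      (Real.exp (2 * c * (t - t₀)) *
        (2 * c * (inner ℝ (x t - y t) (x t - y t) : ℝ)
          + 2 * (inner ℝ (f (x t) - f (y t)) (x t - y t) : ℝ))) t := by
    intro t ht
    have hE : HasDerivAt (fun t => Real.exp (2 * c * (t - t₀)))
        (2 * c * Real.exp (2 * c * (t - t₀))) t := by
      have h1 : HasDerivAt (fun t : ℝ => 2 * c * (t - t₀)) (2 * c) t := by
        simpa using ((hasDerivAt_id t).sub_const t₀).const_mul (2 * c)
      have := h1.exp
      convert this using 1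
      ring
    have hd : HasDerivAt (fun t => x t - y t) (f (x t) - f (y t)) t :=
      (hx t ht).sub (hy t ht)
    have hN := hd.inner ℝ hd
    have hmul := hE.mul hN
    refine hmul.congr_deriv ?_
    have hsym : (inner ℝ (x t - y t) (f (x t) - f (y t)) : ℝ)
        = (inner ℝ (f (x t) - f (y t)) (x t - y t) : ℝ) := real_inner_comm _ _
    rw [hsym]; ring
  have hanti : AntitoneOn u (Ici t₀) := by
    apply antitoneOn_of_deriv_nonpos (convex_Ici t₀)
      (fun t ht => (hud t ht).continuousAt.continuousWithinAt)
      (fun t ht => by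
        rw [interior_Ici] at ht
        exact (hud t (le_of_lt ht)).differentiableAt.differentiableWithinAt)
    intro t ht
    rw [interior_Ici] at ht
    rw [(hud t ht.le).deriv]
    have hkey := key_ineq f hf C hconv c hμ (hxC t ht.le) (hyC t ht.le)
    have hn : (inner ℝ (x t - y t) (x t - y t) : ℝ) = ‖x t - y t‖ ^ 2 :=
      real_inner_self_eq_norm_sq _
    have hEp : (0:ℝ) < Real.exp (2 * c * (t - t₀)) := Real.exp_pos _
    apply mul_nonpos_of_nonneg_of_nonpos hEp.le
    rw [hn]; linarith
  intro t ht
  have h1 := hanti self_mem_Ici (mem_Ici.2 ht) ht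
  rw [hu] at h1
  simp only [sub_self, mul_zero, Real.exp_zero, one_mul] at h1
  have hn1 : (inner ℝ (x t - y t) (x t - y t) : ℝ) = ‖x t - y t‖ ^ 2 :=
    real_inner_self_eq_norm_sq _
  have hn0 : (inner ℝ (x t₀ - y t₀) (x t₀ - y t₀) : ℝ) = ‖x t₀ - y t₀‖ ^ 2 :=
    real_inner_self_eq_norm_sq _
  rw [hn1, hn0] at h1
  have hEp : (0:ℝ) < Real.exp (2 * c * (t - t₀)) := Real.exp_pos _
  have hsq : ‖x t - y t‖ ^ 2 ≤ (Real.exp (-c * (t - t₀)) * ‖x t₀ - y t₀‖) ^ 2 := by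
    have hexp : (Real.exp (-c * (t - t₀))) ^ 2 = (Real.exp (2 * c * (t - t₀)))⁻¹ := by
      rw [sq, ← Real.exp_add, ← Real.exp_neg]
      ring_nf
    rw [mul_pow, hexp, inv_mul_eq_div, le_div_iff₀ hEp, mul_comm]
    exact h1
  have hs := Real.sqrt_le_sqrt hsq
  rwa [Real.sqrt_sq (norm_nonneg _), Real.sqrt_sq (by positivity)] at hs
end

section
/- Suppose x, y : [t₀, ∞) → ℝ are differentiable, g : ℝ → ℝ is continuously differentiable with g'(s) ≤ −c for all s in an interval J containing the ranges of x and y, and ẋ = g(x), ẏ = g(y). Then t ↦ e^{c(t−t₀)}|x(t) − y(t)| is nonincreasing; hence |x(t) − y(t)| ≤ e^{−c(t−t₀)}|x(t₀) − y(t₀)|. -/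
open Set

/-- Scalar contraction: if g' ≤ -c on an interval J containing the ranges of
two solutions of ẋ = g(x), then e^{c(t-t₀)}|x(t)-y(t)| is nonincreasing, hence
|x(t)-y(t)| ≤ e^{-c(t-t₀)}|x(t₀)-y(t₀)|. -/
theorem stmt19 (c t₀ : ℝ) (hc : 0 < c) (g : ℝ → ℝ) (hg : ContDiff ℝ 1 g)
    (J : Set ℝ) (hJ : Convex ℝ J) (hg' : ∀ s ∈ J, deriv g s ≤ -c)
    (x y : ℝ → ℝ)
    (hxJ : ∀ t, t₀ ≤ t → x t ∈ J) (hyJ : ∀ t, t₀ ≤ t → y t ∈ J)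
    (hx : ∀ t, t₀ ≤ t → HasDerivAt x (g (x t)) t)
    (hy : ∀ t, t₀ ≤ t → HasDerivAt y (g (y t)) t) :
    AntitoneOn (fun t => Real.exp (c * (t - t₀)) * |x t - y t|) (Ici t₀) ∧
    ∀ t, t₀ ≤ t →
      |x t - y t| ≤ Real.exp (-c * (t - t₀)) * |x t₀ - y t₀| := by
  have hgdiff : Differentiable ℝ g := hg.differentiable one_ne_zero
  -- one-sided Lipschitz estimate
  have key : ∀ a ∈ J, ∀ b ∈ J, (a - b) * (g a - g b) ≤ -c * (a - b) ^ 2 := by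
    have hanti : AntitoneOn (fun s => g s + c * s) J := by
      apply antitoneOn_of_deriv_nonpos hJ
      · exact (hg.continuous.add (continuous_const.mul continuous_id)).continuousOn
      · intro s _
        exact ((hgdiff s).add ((differentiable_id.const_mul c) s)).differentiableWithinAt
      · intro s hs
        have hd : HasDerivAt (fun s => g s + c * s) (deriv g s + c) s := by
          exact ((hgdiff s).hasDerivAt.add ((hasDerivAt_id' s).const_mul c)).congr_deriv (by ring)
        rw [hd.deriv]
        have := hg' s (interior_subset hs)
        linarith
    intro a ha b hb
    rcases le_total a b with h | h
    · have := hanti ha hb h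
      simp only at this
      nlinarith
    · have := hanti hb ha h
      simp only at this
      nlinarith
  set u : ℝ → ℝ := fun t => x t - y t with hu
  set w : ℝ → ℝ := fun t => Real.exp (2 * c * (t - t₀)) * (u t) ^ 2 with hwdef
  have hw : ∀ t, t₀ ≤ t → HasDerivAt w
      (Real.exp (2 * c * (t - t₀)) * (2 * c * (u t) ^ 2 + 2 * (u t) * (g (x t) - g (y t)))) t := by
    intro t ht
    have he : HasDerivAt (fun t => Real.exp (2 * c * (t - t₀)))
        (Real.exp (2 * c * (t - t₀)) * (2 * c)) t := by
      have h1 : HasDerivAt (fun t : ℝ => 2 * c * (t - t₀)) (2 * c) t := by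
        simpa using ((hasDerivAt_id t).sub_const t₀).const_mul (2 * c)
      exact (Real.hasDerivAt_exp _).comp t h1
    have hu' : HasDerivAt u (g (x t) - g (y t)) t := (hx t ht).sub (hy t ht)
    have := he.fun_mul (hu'.fun_pow 2)
    exact this.congr_deriv (by rw [show (2:ℕ) - 1 = 1 from rfl]; ring)
  have hwanti : AntitoneOn w (Ici t₀) := by
    apply antitoneOn_of_deriv_nonpos (convex_Ici t₀)
    · intro t ht
      exact (hw t ht).continuousAt.continuousWithinAt
    · intro t ht
      rw [interior_Ici] at ht
      exact (hw t (le_of_lt ht)).differentiableAt.differentiableWithinAt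
    · intro t ht
      rw [interior_Ici] at ht
      rw [(hw t (le_of_lt ht)).deriv]
      have hk := key (x t) (hxJ t (le_of_lt ht)) (y t) (hyJ t (le_of_lt ht))
      have hupos : 2 * c * (u t) ^ 2 + 2 * (u t) * (g (x t) - g (y t)) ≤ 0 := by
        simp only [hu]
        nlinarith
      exact mul_nonpos_of_nonneg_of_nonpos (Real.exp_nonneg _) hupos
  have hvw : ∀ t, Real.exp (c * (t - t₀)) * |u t| = Real.sqrt (w t) := by
    intro t
    rw [hwdef]
    rw [Real.sqrt_mul (Real.exp_nonneg _), Real.sqrt_sq_eq_abs]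
    congr 1
    rw [show 2 * c * (t - t₀) = c * (t - t₀) + c * (t - t₀) by ring, Real.exp_add,
      Real.sqrt_mul_self (Real.exp_nonneg _)]
  have hmain : AntitoneOn (fun t => Real.exp (c * (t - t₀)) * |x t - y t|) (Ici t₀) := by
    intro a ha b hb hab
    simp only
    rw [show |x a - y a| = |u a| from rfl, show |x b - y b| = |u b| from rfl, hvw, hvw]
    exact Real.sqrt_le_sqrt (hwanti ha hb hab)
  refine ⟨hmain, fun t ht => ?_⟩
  have h1 := hmain (self_mem_Ici) ht ht
  simp only [sub_self, mul_zero, Real.exp_zero, one_mul] at h1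
  rw [neg_mul, Real.exp_neg, inv_mul_eq_div, le_div_iff₀ (Real.exp_pos _)]
  calc |x t - y t| * Real.exp (c * (t - t₀))
      = Real.exp (c * (t - t₀)) * |x t - y t| := by ring
    _ ≤ |x t₀ - y t₀| := h1
end
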